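/- For every N > 0 one has the scaling relation e(N) = N³ ē(1/N) between the two infima. -/

import Mathlib

open MeasureTheory Filter
open scoped Pointwise
open scoped FourierTransform SchwartzMap RealInnerProductSpace

noncomputable section

/-- Euclidean space ℝ³. -/
abbrev R3 := EuclideanSpace ℝ (Fin 3)

/-- Newtonian potential convolution `(|x|⁻¹ ∗ f)(x) = ∫ f(y)/|x-y| dy`. -/
def conv (f : R3 → ℝ) (x : R3) : ℝ := ∫ y : R3, f y / ‖x - y‖

/-- `u ∈ H^{1/2}(ℝ³)`: `u ∈ L²` and `∫ √(1+|ξ|²) |𝓕u(ξ)|² dξ < ∞`. -/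
def InH12 (u : R3 → ℂ) : Prop :=
  MemLp u 2 volume ∧
    Integrable (fun ξ : R3 => Real.sqrt (1 + ‖ξ‖ ^ 2) * ‖𝓕 u ξ‖ ^ 2) volume

/-- The double (Hartree) integral `∬ |u(x)|²|u(y)|²/|x-y| dx dy`. -/
def hartree (u : R3 → ℂ) : ℝ := ∫ x : R3, ∫ y : R3, ‖u x‖ ^ 2 * ‖u y‖ ^ 2 / ‖x - y‖

/-- The pseudo-relativistic Hartree energy `𝓔(u)` with mass `m`. -/
def energyE (m : ℝ) (u : R3 → ℂ) : ℝ :=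
  (∫ ξ : R3, (Real.sqrt (‖ξ‖ ^ 2 + m ^ 2) - m) * ‖𝓕 u ξ‖ ^ 2) - (1 / 2) * hartree u

/-- `e(N)`. -/
def eN (m N : ℝ) : ℝ :=
  sInf {t : ℝ | ∃ u : R3 → ℂ, InH12 u ∧ (∫ x : R3, ‖u x‖ ^ 2) = N ∧ energyE m u = t}

/-- The rescaled energy `𝓔_c(u)`. -/
def energyEc (m c : ℝ) (u : R3 → ℂ) : ℝ :=
  (∫ ξ : R3, (Real.sqrt (c ^ 2 * ‖ξ‖ ^ 2 + m ^ 2 * c ^ 4) - m * c ^ 2) * ‖𝓕 u ξ‖ ^ 2)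
    - (1 / 2) * hartree u

/-- `ē(c)`. -/
def ebar (m c : ℝ) : ℝ :=
  sInf {t : ℝ | ∃ u : R3 → ℂ, InH12 u ∧ (∫ x : R3, ‖u x‖ ^ 2) = 1 ∧ energyEc m c u = t}

/-- `u` is a minimizer of `e(N)`. -/
def IsMinimizerE (m N : ℝ) (u : R3 → ℂ) : Prop :=
  InH12 u ∧ (∫ x : R3, ‖u x‖ ^ 2) = N ∧ energyE m u = eN m N

/-- `u` is a minimizer of `ē(c)`. -/
def IsMinimizerEc (m c : ℝ) (u : R3 → ℂ) : Prop :=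
  InH12 u ∧ (∫ x : R3, ‖u x‖ ^ 2) = 1 ∧ energyEc m c u = ebar m c

/-- Radial symmetry. -/
def Radial (f : R3 → ℝ) : Prop := ∀ x y : R3, ‖x‖ = ‖y‖ → f x = f y

/-! ### Auxiliary scaling machinery -/

/-- The rescaling `x ↦ a · u(x/b)`. -/
def sc (a b : ℝ) (u : R3 → ℂ) : R3 → ℂ := fun x => (a : ℂ) * u (b⁻¹ • x)

lemma sc_inv (u : R3 → ℂ) {a b : ℝ} (ha : a ≠ 0) (hb : b ≠ 0) :
    sc a⁻¹ b⁻¹ (sc a b u) = u := by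
  funext x
  simp only [sc, inv_inv, inv_smul_smul₀ hb]
  rw [← mul_assoc, ← Complex.ofReal_mul, inv_mul_cancel₀ ha, Complex.ofReal_one, one_mul]

lemma norm_sc_sq (u : R3 → ℂ) (a b : ℝ) (x : R3) :
    ‖sc a b u x‖ ^ 2 = a ^ 2 * ‖u (b⁻¹ • x)‖ ^ 2 := by
  simp [sc, norm_mul, mul_pow, sq_abs]

lemma mass_sc (u : R3 → ℂ) (a : ℝ) {b : ℝ} (hb : 0 < b) :
    (∫ x : R3, ‖sc a b u x‖ ^ 2) = a ^ 2 * b ^ 3 * ∫ x : R3, ‖u x‖ ^ 2 := by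
  have key := MeasureTheory.Measure.integral_comp_inv_smul_of_nonneg (volume (α := R3))
    (fun z : R3 => a ^ 2 * ‖u z‖ ^ 2) hb.le
  rw [finrank_euclideanSpace_fin] at key
  have h : (∫ x : R3, ‖sc a b u x‖ ^ 2)
      = ∫ x : R3, (fun z : R3 => a ^ 2 * ‖u z‖ ^ 2) (b⁻¹ • x) := by
    congr 1; funext x; simp [sc, norm_mul, mul_pow, sq_abs]
  rw [h, key, smul_eq_mul]
  simp only [integral_const_mul]
  ring

lemma fourier_sc (u : R3 → ℂ) (a : ℝ) {b : ℝ} (hb : 0 < b) (ξ : R3) :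
    𝓕 (sc a b u) ξ = ((a * b ^ 3 : ℝ) : ℂ) * 𝓕 u (b • ξ) := by
  have hb' : b ≠ 0 := hb.ne'
  rw [Real.fourier_eq, Real.fourier_eq]
  have key := MeasureTheory.Measure.integral_comp_inv_smul_of_nonneg (volume (α := R3))
    (fun x : R3 => (a : ℂ) * (𝐞 (-⟪x, b • ξ⟫) • u x)) hb.le
  rw [finrank_euclideanSpace_fin] at key
  have h : (∫ v : R3, 𝐞 (-⟪v, ξ⟫) • sc a b u v)
      = ∫ v : R3, (fun x : R3 => (a : ℂ) * (𝐞 (-⟪x, b • ξ⟫) • u x)) (b⁻¹ • v) := by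
    congr 1; funext v
    have hinner : ⟪b⁻¹ • v, b • ξ⟫ = ⟪v, ξ⟫ := by
      rw [real_inner_smul_left, real_inner_smul_right, ← mul_assoc, inv_mul_cancel₀ hb', one_mul]
    simp only [sc, hinner, Circle.smul_def, smul_eq_mul]
    ring
  rw [h, key]
  simp only [integral_const_mul]
  rw [Complex.real_smul]
  push_cast
  ring

lemma hartree_sc (u : R3 → ℂ) (a : ℝ) {b : ℝ} (hb : 0 < b) :
    hartree (sc a b u) = a ^ 4 * b ^ 5 * hartree u := by
  have hb' : b ≠ 0 := hb.ne'
  unfold hartree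
  have inner_eq : ∀ x : R3,
      (∫ y : R3, ‖sc a b u x‖ ^ 2 * ‖sc a b u y‖ ^ 2 / ‖x - y‖)
      = b ^ 3 * ∫ z : R3, ‖sc a b u x‖ ^ 2 * (a ^ 2 * ‖u z‖ ^ 2) / ‖x - b • z‖ := by
    intro x
    have key := MeasureTheory.Measure.integral_comp_inv_smul_of_nonneg (volume (α := R3))
      (fun z : R3 => ‖sc a b u x‖ ^ 2 * (a ^ 2 * ‖u z‖ ^ 2) / ‖x - b • z‖) hb.le
    rw [finrank_euclideanSpace_fin, smul_eq_mul] at key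
    have h : (∫ y : R3, ‖sc a b u x‖ ^ 2 * ‖sc a b u y‖ ^ 2 / ‖x - y‖)
        = ∫ y : R3, (fun z : R3 => ‖sc a b u x‖ ^ 2 * (a ^ 2 * ‖u z‖ ^ 2) / ‖x - b • z‖)
          (b⁻¹ • y) := by
      congr 1; funext y
      simp only [smul_inv_smul₀ hb', norm_sc_sq u a b y]
    rw [h, key]
  simp_rw [inner_eq]
  have key2 := MeasureTheory.Measure.integral_comp_inv_smul_of_nonneg (volume (α := R3))
    (fun w : R3 => b ^ 3 * ∫ z : R3, (a ^ 2 * ‖u w‖ ^ 2) * (a ^ 2 * ‖u z‖ ^ 2) / ‖b • w - b • z‖)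
    hb.le
  rw [finrank_euclideanSpace_fin, smul_eq_mul] at key2
  have h2 : (∫ x : R3, b ^ 3 * ∫ z : R3, ‖sc a b u x‖ ^ 2 * (a ^ 2 * ‖u z‖ ^ 2) / ‖x - b • z‖)
      = ∫ x : R3, (fun w : R3 =>
          b ^ 3 * ∫ z : R3, (a ^ 2 * ‖u w‖ ^ 2) * (a ^ 2 * ‖u z‖ ^ 2) / ‖b • w - b • z‖)
        (b⁻¹ • x) := by
    congr 1; funext x
    simp only [smul_inv_smul₀ hb', norm_sc_sq u a b x]
  rw [h2, key2]
  have h3 : ∀ w : R3,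
      (fun w : R3 => b ^ 3 * ∫ z : R3,
        (a ^ 2 * ‖u w‖ ^ 2) * (a ^ 2 * ‖u z‖ ^ 2) / ‖b • w - b • z‖) w
      = (b ^ 2 * a ^ 4) * ∫ z : R3, ‖u w‖ ^ 2 * ‖u z‖ ^ 2 / ‖w - z‖ := by
    intro w
    simp only
    have h4 : (fun z : R3 => (a ^ 2 * ‖u w‖ ^ 2) * (a ^ 2 * ‖u z‖ ^ 2) / ‖b • w - b • z‖)
        = fun z : R3 => (a ^ 4 * b⁻¹) * (‖u w‖ ^ 2 * ‖u z‖ ^ 2 / ‖w - z‖) := by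
      funext z
      have hn : ‖b • w - b • z‖ = b * ‖w - z‖ := by
        rw [← smul_sub, norm_smul, Real.norm_eq_abs, abs_of_pos hb]
      rw [hn, div_eq_mul_inv, div_eq_mul_inv, mul_inv]
      ring
    rw [h4, integral_const_mul]
    field_simp
  simp_rw [h3]
  rw [integral_const_mul]
  ring

lemma kinetic_sc (u : R3 → ℂ) (a : ℝ) {b : ℝ} (hb : 0 < b) (c m : ℝ) :
    (∫ ξ : R3, (Real.sqrt (c ^ 2 * ‖ξ‖ ^ 2 + m ^ 2 * c ^ 4) - m * c ^ 2) * ‖𝓕 (sc a b u) ξ‖ ^ 2)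
    = (a * b ^ 3) ^ 2 * b⁻¹ ^ 3 *
      ∫ η : R3, (Real.sqrt ((c / b) ^ 2 * ‖η‖ ^ 2 + m ^ 2 * c ^ 4) - m * c ^ 2) * ‖𝓕 u η‖ ^ 2 := by
  have hb' : b ≠ 0 := hb.ne'
  have key := MeasureTheory.Measure.integral_comp_smul (volume (α := R3))
    (fun η : R3 => (Real.sqrt ((c / b) ^ 2 * ‖η‖ ^ 2 + m ^ 2 * c ^ 4) - m * c ^ 2) *
      ((a * b ^ 3) ^ 2 * ‖𝓕 u η‖ ^ 2)) b
  rw [finrank_euclideanSpace_fin, smul_eq_mul] at key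
  have h : (∫ ξ : R3, (Real.sqrt (c ^ 2 * ‖ξ‖ ^ 2 + m ^ 2 * c ^ 4) - m * c ^ 2)
        * ‖𝓕 (sc a b u) ξ‖ ^ 2)
      = ∫ ξ : R3, (fun η : R3 => (Real.sqrt ((c / b) ^ 2 * ‖η‖ ^ 2 + m ^ 2 * c ^ 4) - m * c ^ 2) *
          ((a * b ^ 3) ^ 2 * ‖𝓕 u η‖ ^ 2)) (b • ξ) := by
    congr 1; funext ξ
    simp only
    have h1 : ‖𝓕 (sc a b u) ξ‖ ^ 2 = (a * b ^ 3) ^ 2 * ‖𝓕 u (b • ξ)‖ ^ 2 := by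
      rw [fourier_sc u a hb ξ, norm_mul, Complex.norm_real, mul_pow, Real.norm_eq_abs, sq_abs]
    have h2 : (c / b) ^ 2 * ‖b • ξ‖ ^ 2 = c ^ 2 * ‖ξ‖ ^ 2 := by
      rw [norm_smul, Real.norm_eq_abs, abs_of_pos hb]
      field_simp
    rw [h1, h2]
  rw [h, key]
  have habs : |((b : ℝ) ^ 3)⁻¹| = b⁻¹ ^ 3 := by
    rw [abs_of_pos (by positivity), inv_pow]
  rw [habs]
  have heq : (fun η : R3 => (Real.sqrt ((c / b) ^ 2 * ‖η‖ ^ 2 + m ^ 2 * c ^ 4) - m * c ^ 2) *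
          ((a * b ^ 3) ^ 2 * ‖𝓕 u η‖ ^ 2))
      = fun η : R3 => (a * b ^ 3) ^ 2 *
          ((Real.sqrt ((c / b) ^ 2 * ‖η‖ ^ 2 + m ^ 2 * c ^ 4) - m * c ^ 2) * ‖𝓕 u η‖ ^ 2) := by
    funext η; ring
  rw [heq, integral_const_mul]
  ring

lemma inH12_sc (u : R3 → ℂ) (hu : InH12 u) (a : ℝ) {b : ℝ} (hb : 0 < b) :
    InH12 (sc a b u) := by
  have hb' : b ≠ 0 := hb.ne'
  obtain ⟨hu1, hu2⟩ := hu
  constructor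
  · -- Memℒp
    have hmap : Measure.map (b⁻¹ • · : R3 → R3) volume
        = ENNReal.ofReal |((b⁻¹ : ℝ) ^ Module.finrank ℝ R3)⁻¹| • volume :=
      Measure.map_addHaar_smul volume (inv_ne_zero hb')
    have h1 : MemLp u 2 (Measure.map (b⁻¹ • · : R3 → R3) volume) := by
      rw [hmap]
      exact hu1.smul_measure ENNReal.ofReal_ne_top
    have h2 : MemLp (fun x : R3 => u (b⁻¹ • x)) 2 volume :=
      h1.comp_of_map (measurable_const_smul _).aemeasurable
    exact h2.const_mul (a : ℂ)
  · -- Fourier-side integrability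
    set C : ℝ := max 1 b⁻¹ with hC
    have hC1 : (1 : ℝ) ≤ C := le_max_left _ _
    have hCb : b⁻¹ ≤ C := le_max_right _ _
    have hC0 : 0 < C := lt_of_lt_of_le one_pos hC1
    have hsq : ∀ ξ : R3, (0:ℝ) < Real.sqrt (1 + ‖ξ‖ ^ 2) := fun ξ =>
      Real.sqrt_pos.2 (by positivity)
    have hF0 : AEStronglyMeasurable (fun η : R3 => ‖𝓕 u η‖ ^ 2) volume := by
      have hcont : Continuous (fun ξ : R3 => (Real.sqrt (1 + ‖ξ‖ ^ 2))⁻¹) := by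
        apply Continuous.inv₀
        · exact Real.continuous_sqrt.comp (by continuity)
        · exact fun ξ => (hsq ξ).ne'
      have := hu2.aestronglyMeasurable.mul hcont.aestronglyMeasurable
      apply this.congr
      apply Filter.Eventually.of_forall
      intro ξ
      simp only [Pi.mul_apply]
      field_simp
    set G : R3 → ℝ := fun η => Real.sqrt (1 + ‖b⁻¹ • η‖ ^ 2) * ‖𝓕 u η‖ ^ 2 with hG
    have hGmeas : AEStronglyMeasurable G volume := by
      apply AEStronglyMeasurable.mul _ hF0
      apply Continuous.aestronglyMeasurable
      exact Real.continuous_sqrt.comp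
        (continuous_const.add ((continuous_const_smul (b⁻¹ : ℝ)).norm.pow 2))
    have hGle : ∀ η : R3, ‖G η‖ ≤ C * (Real.sqrt (1 + ‖η‖ ^ 2) * ‖𝓕 u η‖ ^ 2) := by
      intro η
      have hsmul : ‖b⁻¹ • η‖ = b⁻¹ * ‖η‖ := by
        rw [norm_smul, Real.norm_eq_abs, abs_of_pos (by positivity)]
      have harg : 1 + ‖b⁻¹ • η‖ ^ 2 ≤ C ^ 2 * (1 + ‖η‖ ^ 2) := by
        rw [hsmul]
        have h1 : (b⁻¹ * ‖η‖) ^ 2 ≤ (C * ‖η‖) ^ 2 := by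
          apply pow_le_pow_left₀ (by positivity)
          exact mul_le_mul_of_nonneg_right hCb (norm_nonneg _)
        nlinarith [sq_nonneg ‖η‖, sq_nonneg C]
      have hroot : Real.sqrt (1 + ‖b⁻¹ • η‖ ^ 2) ≤ C * Real.sqrt (1 + ‖η‖ ^ 2) := by
        calc Real.sqrt (1 + ‖b⁻¹ • η‖ ^ 2) ≤ Real.sqrt (C ^ 2 * (1 + ‖η‖ ^ 2)) :=
              Real.sqrt_le_sqrt harg
          _ = C * Real.sqrt (1 + ‖η‖ ^ 2) := by
              rw [Real.sqrt_mul (sq_nonneg C), Real.sqrt_sq hC0.le]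
      have hGnonneg : 0 ≤ G η := by
        apply mul_nonneg (Real.sqrt_nonneg _) (sq_nonneg _)
      rw [Real.norm_eq_abs, abs_of_nonneg hGnonneg, hG]
      simp only
      exact le_trans (mul_le_mul_of_nonneg_right hroot (sq_nonneg _)) (le_of_eq (by ring))
    have hGint : Integrable G volume := by
      apply Integrable.mono' (hu2.const_mul C) hGmeas
      exact Filter.Eventually.of_forall hGle
    have hGcomp : Integrable (fun ξ : R3 => G (b • ξ)) volume := hGint.comp_smul hb'
    have := hGcomp.const_mul ((a * b ^ 3) ^ 2)
    apply this.congr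
    apply Filter.Eventually.of_forall
    intro ξ
    simp only
    rw [fourier_sc u a hb ξ]
    have h1 : ‖((a * b ^ 3 : ℝ) : ℂ) * 𝓕 u (b • ξ)‖ ^ 2
        = (a * b ^ 3) ^ 2 * ‖𝓕 u (b • ξ)‖ ^ 2 := by
      rw [norm_mul, mul_pow, Complex.norm_real, Real.norm_eq_abs, sq_abs]
    rw [h1, hG]
    simp only
    rw [inv_smul_smul₀ hb']
    ring

/-- The key scaling identity for energies. -/
lemma energyE_scale (m : ℝ) {N : ℝ} (hN : 0 < N) (u : R3 → ℂ) :
    energyE m u = N ^ 3 * energyEc m (1 / N) (sc (N ^ 2)⁻¹ N u) := by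
  have hN' : N ≠ 0 := hN.ne'
  unfold energyE energyEc
  rw [kinetic_sc u (N ^ 2)⁻¹ hN (1 / N) m, hartree_sc u (N ^ 2)⁻¹ hN]
  have hpt : ∀ η : R3,
      (Real.sqrt ((1 / N / N) ^ 2 * ‖η‖ ^ 2 + m ^ 2 * (1 / N) ^ 4) - m * (1 / N) ^ 2)
        * ‖𝓕 u η‖ ^ 2
      = (N ^ 2)⁻¹ * ((Real.sqrt (‖η‖ ^ 2 + m ^ 2) - m) * ‖𝓕 u η‖ ^ 2) := by
    intro η
    have h1 : (1 / N / N) ^ 2 * ‖η‖ ^ 2 + m ^ 2 * (1 / N) ^ 4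
        = ((N ^ 2)⁻¹) ^ 2 * (‖η‖ ^ 2 + m ^ 2) := by
      field_simp
    rw [h1, Real.sqrt_mul (sq_nonneg _), Real.sqrt_sq (by positivity)]
    field_simp
  simp_rw [hpt]
  rw [integral_const_mul]
  field_simp

/-- the scaling relation `e(N) = N³ ē(1/N)`. -/
theorem stmt_2 (m : ℝ) (hm : 0 < m) (N : ℝ) (hN : 0 < N) :
    eN m N = N ^ 3 * ebar m (1 / N) := by
  have hN' : N ≠ 0 := hN.ne'
  have hset : {t : ℝ | ∃ u : R3 → ℂ, InH12 u ∧ (∫ x : R3, ‖u x‖ ^ 2) = N ∧ energyE m u = t}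
      = (N ^ 3) •
        {t : ℝ | ∃ u : R3 → ℂ, InH12 u ∧ (∫ x : R3, ‖u x‖ ^ 2) = 1 ∧ energyEc m (1 / N) u = t} := by
    ext t
    constructor
    · rintro ⟨u, hu, hmass, rfl⟩
      apply Set.mem_smul_set.mpr
      refine ⟨energyEc m (1 / N) (sc (N ^ 2)⁻¹ N u),
        ⟨sc (N ^ 2)⁻¹ N u, inH12_sc u hu _ hN, ?_, rfl⟩, ?_⟩
      · rw [mass_sc u (N ^ 2)⁻¹ hN, hmass]
        field_simp
      · rw [smul_eq_mul]
        exact (energyE_scale m hN u).symm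
    · intro ht
      obtain ⟨s, ⟨v, hv, hmass, rfl⟩, rfl⟩ := Set.mem_smul_set.mp ht
      have hNi : (0 : ℝ) < N⁻¹ := by positivity
      refine ⟨sc (N ^ 2) N⁻¹ v, inH12_sc v hv _ hNi, ?_, ?_⟩
      · rw [mass_sc v (N ^ 2) hNi, hmass]
        field_simp
      · rw [smul_eq_mul, energyE_scale m hN (sc (N ^ 2) N⁻¹ v)]
        have hvv : sc (N ^ 2)⁻¹ N (sc (N ^ 2) N⁻¹ v) = v := by
          have h := sc_inv v (a := N ^ 2) (b := N⁻¹) (pow_ne_zero 2 hN') (inv_ne_zero hN')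
          rwa [inv_inv] at h
        rw [hvv]
  rw [eN, hset, Real.sInf_smul_of_nonneg (by positivity), smul_eq_mul, ebar]
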